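/- Let σ be a permutation of order p (odd prime) with c cycles and f fixed points, and let g(k) = d + ⌈d/2⌉ + ⌈d/4⌉ + ... + ⌈d/2^{k-1}⌉. If a binary self-dual [n, n/2, d] code C admits σ as automorphism, and 2 is a primitive root modulo p, then c is even. -/

import Mathlib

open Finset

/-- Hamming weight of a binary vector. -/
def wt {ι : Type*} [Fintype ι] (v : ι → ZMod 2) : ℕ :=
  (Finset.univ.filter fun i => v i ≠ 0).card

/-- Dual of a binary code under the standard dot product. -/
def dualCode {ι : Type*} [Fintype ι] (C : Submodule (ZMod 2) (ι → ZMod 2)) :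
    Submodule (ZMod 2) (ι → ZMod 2) where
  carrier := {x | ∀ c ∈ C, ∑ i, x i * c i = 0}
  add_mem' := by
    intro a b ha hb c hc
    have := ha c hc; have := hb c hc
    simp only [Pi.add_apply, add_mul, Finset.sum_add_distrib]
    simp [ha c hc, hb c hc]
  zero_mem' := by intro c hc; simp
  smul_mem' := by
    intro r a ha c hc
    simp only [Pi.smul_apply, smul_eq_mul, mul_assoc, ← Finset.mul_sum]
    simp [ha c hc]

/-- Fixed subcode F_σ(C). -/
def fixedCode {ι : Type*} (σ : Equiv.Perm ι) (C : Submodule (ZMod 2) (ι → ZMod 2)) :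
    Submodule (ZMod 2) (ι → ZMod 2) where
  carrier := {v | v ∈ C ∧ v ∘ σ = v}
  add_mem' := by
    rintro a b ⟨ha, ha'⟩ ⟨hb, hb'⟩
    refine ⟨C.add_mem ha hb, ?_⟩
    funext i
    simpa using congrFun (congrArg₂ (· + ·) ha' hb') i
  zero_mem' := ⟨C.zero_mem, rfl⟩
  smul_mem' := by
    rintro r a ⟨ha, ha'⟩
    exact ⟨C.smul_mem r ha, by funext i; simpa using congrArg (r • ·) (congrFun ha' i)⟩

/-- Subcode E_σ(C): codewords with even weight on each cycle (and zero on fixed points). -/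
def evenCode {ι : Type*} (p : ℕ) (σ : Equiv.Perm ι) (C : Submodule (ZMod 2) (ι → ZMod 2)) :
    Submodule (ZMod 2) (ι → ZMod 2) where
  carrier := {v | v ∈ C ∧ ∀ i, ∑ k ∈ Finset.range p, v ((σ ^ k) i) = 0}
  add_mem' := by
    rintro a b ⟨ha, ha'⟩ ⟨hb, hb'⟩
    refine ⟨C.add_mem ha hb, fun i => ?_⟩
    simp [Finset.sum_add_distrib, ha' i, hb' i]
  zero_mem' := ⟨C.zero_mem, by simp⟩
  smul_mem' := by
    rintro r a ⟨ha, ha'⟩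
    refine ⟨C.smul_mem r ha, fun i => ?_⟩
    simp only [Pi.smul_apply, smul_eq_mul]
    rw [← Finset.mul_sum, ha' i, mul_zero]

-- ===== auxiliary lemmas =====
set_option linter.unusedVariables false
open Module

set_option linter.unusedSectionVars false
set_option synthInstance.maxHeartbeats 1000000
set_option maxHeartbeats 1000000

open Finset Module

section Bilin
variable {K V : Type*} [Field K] [AddCommGroup V] [Module K V] [FiniteDimensional K V]

lemma two_mul_finrank_of_selfdual (B : LinearMap.BilinForm K V)
    (hsymm : ∀ x y, B x y = B y x)
    (hnd : ∀ x, (∀ y, B x y = 0) → x = 0)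
    (W : Submodule K V) (hW : B.orthogonal W = W) :
    2 * finrank K W = finrank K V := by
  have hrefl : B.IsRefl := fun x y h => by rw [hsymm]; exact h
  have htop : B.orthogonal ⊤ = ⊥ := by
    rw [Submodule.eq_bot_iff]
    intro x hx
    exact hnd x fun y => hrefl y x (hx y Submodule.mem_top)
  have := LinearMap.BilinForm.finrank_add_finrank_orthogonal hrefl (B := B) W
  rw [htop, inf_bot_eq, finrank_bot, add_zero, hW] at this
  omega
end Bilin

/-- the dot product bilinear form -/
def dotForm (ι : Type*) [Fintype ι] : LinearMap.BilinForm (ZMod 2) (ι → ZMod 2) :=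
  LinearMap.mk₂ (ZMod 2) (fun x y => ∑ i, x i * y i)
    (fun x x' y => by simp [add_mul, Finset.sum_add_distrib])
    (fun a x y => by simp [Finset.mul_sum, mul_assoc])
    (fun x y y' => by simp [mul_add, Finset.sum_add_distrib])
    (fun a x y => by simp only [Pi.smul_apply, smul_eq_mul, Finset.mul_sum]; exact Finset.sum_congr rfl fun i _ => by ring)

lemma dotForm_apply {ι : Type*} [Fintype ι] (x y : ι → ZMod 2) :
    dotForm ι x y = ∑ i, x i * y i := rfl

lemma dotForm_symm {ι : Type*} [Fintype ι] (x y : ι → ZMod 2) :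
    dotForm ι x y = dotForm ι y x := by
  simp [dotForm_apply, mul_comm]

lemma dotForm_nd {ι : Type*} [Fintype ι] [DecidableEq ι] (x : ι → ZMod 2)
    (h : ∀ y, dotForm ι x y = 0) : x = 0 := by
  funext j
  have := h (Pi.single j 1)
  simpa [dotForm_apply, Pi.single_apply, mul_ite, Finset.sum_ite_eq'] using this


lemma dualCode_eq_orthogonal {ι : Type*} [Fintype ι] (C : Submodule (ZMod 2) (ι → ZMod 2)) :
    dualCode C = (dotForm ι).orthogonal C := by
  ext x
  constructor
  · intro hx c hc
    have := hx c hc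
    show dotForm ι c x = 0
    rw [dotForm_symm]
    exact this
  · intro hx c hc
    have : dotForm ι c x = 0 := hx c hc
    rw [dotForm_symm] at this
    exact this

lemma two_mul_finrank_selfdual_code {n : ℕ} (C : Submodule (ZMod 2) (Fin n → ZMod 2))
    (hself : C = dualCode C) : 2 * finrank (ZMod 2) C = n := by
  have h := two_mul_finrank_of_selfdual (dotForm (Fin n)) dotForm_symm dotForm_nd C
    (by rw [← dualCode_eq_orthogonal, ← hself])
  simpa using h


section Helpers
variable {ι : Type*} [Fintype ι] (σ : Equiv.Perm ι) (C : Submodule (ZMod 2) (ι → ZMod 2))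

lemma comp_pow_mem (haut : ∀ v, v ∈ C ↔ v ∘ σ ∈ C) (v : ι → ZMod 2) (hv : v ∈ C) (k : ℕ) :
    (fun i => v ((σ ^ k) i)) ∈ C := by
  induction k with
  | zero => simpa using hv
  | succ k ih =>
      have : (fun i => v ((σ ^ (k+1)) i)) = (fun i => v ((σ ^ k) i)) ∘ σ := by
        funext i
        simp [pow_succ, Equiv.Perm.mul_apply]
      rw [this]
      exact (haut _).1 ih

lemma inv_apply_pow (u : ι → ZMod 2) (hu : u ∘ σ = u) : ∀ (k : ℕ) (i : ι),
    u ((σ ^ k) i) = u i := by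
  intro k
  induction k with
  | zero => simp
  | succ k ih =>
      intro i
      have h1 : (σ ^ (k+1)) i = (σ ^ k) (σ i) := by
        simp [pow_succ, Equiv.Perm.mul_apply]
      rw [h1, ih (σ i)]
      exact congrFun hu i

/-- the norm/trace linear map N v = ∑ v ∘ σ^k -/
def normMap (p : ℕ) : (ι → ZMod 2) →ₗ[ZMod 2] (ι → ZMod 2) where
  toFun v := fun i => ∑ k ∈ Finset.range p, v ((σ ^ k) i)
  map_add' a b := by funext i; simp [Finset.sum_add_distrib]
  map_smul' r a := by
    funext i
    simp only [Pi.smul_apply, smul_eq_mul, RingHom.id_apply]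
    rw [← Finset.mul_sum]

end Helpers

section RankDecomp
variable {n p : ℕ}

lemma natCast_odd_zmod2 (hodd : Odd p) : (p : ZMod 2) = 1 := by
  have h : p % 2 = 1 := Nat.odd_iff.1 hodd
  rw [← ZMod.natCast_mod, h, Nat.cast_one]

lemma finrank_decomp (hp : p.Prime) (hodd : Odd p) (σ : Equiv.Perm (Fin n))
    (C : Submodule (ZMod 2) (Fin n → ZMod 2))
    (haut : ∀ v, v ∈ C ↔ v ∘ σ ∈ C) (hord : orderOf σ = p) :
    finrank (ZMod 2) C =
      finrank (ZMod 2) (fixedCode σ C) + finrank (ZMod 2) (evenCode p σ C) := by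
  classical
  set N := ((normMap σ p).comp C.subtype) with hN
  have hNapply : ∀ (v : C) (i : Fin n),
      N v i = ∑ k ∈ Finset.range p, (v : Fin n → ZMod 2) ((σ ^ k) i) := fun v i => rfl
  have hσp : σ ^ p = 1 := by rw [← hord]; exact pow_orderOf_eq_one σ
  -- range N = fixedCode
  have hrange : LinearMap.range N = fixedCode σ C := by
    apply le_antisymm
    · rintro _ ⟨⟨v, hv⟩, rfl⟩
      constructor
      · -- N v ∈ C
        have : (fun i => ∑ k ∈ Finset.range p, v ((σ ^ k) i)) ∈ C := by
          have := Submodule.sum_mem C (t := Finset.range p)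
            (f := fun k => (fun i => v ((σ ^ k) i)))
            (fun k _ => comp_pow_mem σ C haut v hv k)
          convert this using 1
          funext i
          simp
        exact this
      · -- invariance
        funext i
        show N ⟨v, hv⟩ (σ i) = N ⟨v, hv⟩ i
        rw [hNapply, hNapply]
        have key : ∀ k, v ((σ ^ k) (σ i)) = v ((σ ^ (k+1)) i) := by
          intro k
          have h : (σ ^ (k+1)) i = (σ ^ k) (σ i) := by
            simp [pow_succ, Equiv.Perm.mul_apply]
          rw [h]
        simp only [key]
        have h1 : ∑ k ∈ Finset.range p, v ((σ ^ (k+1)) i) + v ((σ ^ 0) i)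
            = ∑ k ∈ Finset.range p, v ((σ ^ k) i) + v ((σ ^ p) i) := by
          rw [← Finset.sum_range_succ' (fun k => v ((σ ^ k) i)) p,
              ← Finset.sum_range_succ (fun k => v ((σ ^ k) i)) p]
        have h2 : v ((σ ^ p) i) = v ((σ ^ 0) i) := by rw [hσp]; simp
        rw [h2] at h1
        exact add_right_cancel h1
    · rintro u ⟨hu, hinv⟩
      refine ⟨⟨u, hu⟩, ?_⟩
      funext i
      rw [hNapply]
      simp only
      have : ∀ k ∈ Finset.range p, u ((σ ^ k) i) = u i :=
        fun k _ => inv_apply_pow σ u hinv k i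
      rw [Finset.sum_congr rfl this, Finset.sum_const, Finset.card_range]
      rw [nsmul_eq_mul, natCast_odd_zmod2 hodd, one_mul]
  -- ker N = comap of evenCode
  have hker : LinearMap.ker N = (evenCode p σ C).comap C.subtype := by
    ext ⟨v, hv⟩
    simp only [LinearMap.mem_ker, Submodule.mem_comap]
    constructor
    · intro h
      refine ⟨hv, fun i => ?_⟩
      have := congrFun (congrArg (fun (w : Fin n → ZMod 2) => w) h) i
      simpa [hNapply] using congrFun h i
    · rintro ⟨-, h⟩
      funext i
      simpa [hNapply] using h i
  have hrn := LinearMap.finrank_range_add_finrank_ker N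
  rw [hrange, hker] at hrn
  have heq : finrank (ZMod 2) ((evenCode p σ C).comap C.subtype)
      = finrank (ZMod 2) (evenCode p σ C) := by
    have hle : evenCode p σ C ≤ C := fun v hv => hv.1
    exact (Submodule.comapSubtypeEquivOfLe hle).finrank_eq
  rw [heq] at hrn
  exact hrn.symm
end RankDecomp

section Orbits
open MulAction
variable {n p c f : ℕ} (σ : Equiv.Perm (Fin n))

lemma coe_zpowers_eq_pow (g : Subgroup.zpowers σ) : ∃ k : ℕ, (g : Equiv.Perm (Fin n)) = σ ^ k := by
  have hg : (g : Equiv.Perm (Fin n)) ∈ Submonoid.powers σ :=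
    mem_powers_iff_mem_zpowers.2 g.2
  obtain ⟨k, hk⟩ := hg
  exact ⟨k, hk.symm⟩

lemma fix_pow {i : Fin n} (hi : σ i = i) (k : ℕ) : (σ ^ k) i = i := by
  induction k with
  | zero => simp
  | succ k ih => rw [pow_succ, Equiv.Perm.mul_apply, hi, ih]

lemma smul_fix {i : Fin n} (hi : σ i = i) (g : Subgroup.zpowers σ) : g • i = i := by
  obtain ⟨k, hk⟩ := coe_zpowers_eq_pow σ g
  show (g : Equiv.Perm (Fin n)) i = i
  rw [hk]; exact fix_pow σ hi k

lemma orbit_eq_singleton {i : Fin n} (hi : σ i = i) :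
    orbit (Subgroup.zpowers σ) i = {i} := by
  ext x
  constructor
  · rintro ⟨g, rfl⟩
    simp only [Set.mem_singleton_iff]
    exact smul_fix σ hi g
  · rintro rfl
    exact mem_orbit_self _

lemma card_orbit_fix {i : Fin n} (hi : σ i = i) [Fintype (orbit (Subgroup.zpowers σ) i)] :
    Fintype.card (orbit (Subgroup.zpowers σ) i) = 1 := by
  classical
  have := orbit_eq_singleton σ hi
  rw [← Set.toFinset_card]
  simp [this]

lemma card_orbit_not_fix (hp : p.Prime) (hord : orderOf σ = p) {i : Fin n} (hi : ¬ σ i = i)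
    [Fintype (orbit (Subgroup.zpowers σ) i)] :
    Fintype.card (orbit (Subgroup.zpowers σ) i) = p := by
  classical
  have hdvd : Fintype.card (orbit (Subgroup.zpowers σ) i) ∣ p := by
    have h := card_orbit_mul_card_stabilizer_eq_card_group (Subgroup.zpowers σ) i
    have hcard : Fintype.card (Subgroup.zpowers σ) = p := by
      rw [← Nat.card_eq_fintype_card, Nat.card_zpowers, hord]
    exact ⟨_, by rw [← hcard, ← h]⟩
  rcases (Nat.Prime.eq_one_or_self_of_dvd hp _ hdvd) with h1 | hp'
  · exfalso
    have hσi : σ i ∈ orbit (Subgroup.zpowers σ) i :=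
      ⟨⟨σ, Subgroup.mem_zpowers σ⟩, rfl⟩
    have hii : i ∈ orbit (Subgroup.zpowers σ) i := mem_orbit_self i
    have := Fintype.card_le_one_iff.1 (le_of_eq h1) ⟨σ i, hσi⟩ ⟨i, hii⟩
    exact hi (by simpa using congrArg Subtype.val this)
  · exact hp'
end Orbits

section Counting
open MulAction
variable {n p c f : ℕ}

lemma card_orbits_eq (σ : Equiv.Perm (Fin n)) (hp : p.Prime) (hord : orderOf σ = p)
    (hfix : (Finset.univ.filter fun i => σ i = i).card = f)
    (hn : n = c * p + f) :
    Nat.card (orbitRel.Quotient (Subgroup.zpowers σ) (Fin n)) = c + f := by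
  classical
  set G := Subgroup.zpowers σ with hG
  set Ω := orbitRel.Quotient G (Fin n) with hΩ
  have hsum : n = ∑ ω : Ω, Fintype.card (orbit G (Quotient.out ω)) := by
    calc n = Fintype.card (Fin n) := by simp
    _ = Fintype.card ((ω : Ω) × orbit G (Quotient.out ω)) :=
        Fintype.card_congr (selfEquivSigmaOrbits G (Fin n))
    _ = ∑ ω : Ω, Fintype.card (orbit G (Quotient.out ω)) := Fintype.card_sigma
  set P := fun ω : Ω => σ (Quotient.out ω) = Quotient.out ω with hP
  set A := Finset.univ.filter P with hA
  set B := Finset.univ.filter (fun ω => ¬ P ω) with hB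
  have hsplit : n = A.card + B.card * p := by
    rw [hsum, ← Finset.sum_filter_add_sum_filter_not Finset.univ P]
    congr 1
    · rw [Finset.sum_congr rfl (fun ω hω => card_orbit_fix σ (Finset.mem_filter.1 hω).2)]
      simp [hA]
      convert rfl
    · rw [Finset.sum_congr rfl
        (fun ω hω => card_orbit_not_fix σ hp hord (Finset.mem_filter.1 hω).2)]
      rw [Finset.sum_const, smul_eq_mul]
  -- card A = f
  have hAf : A.card = f := by
    rw [← hfix]
    apply Finset.card_bij (fun ω _ => Quotient.out ω)
    · intro ω hω
      simp only [Finset.mem_filter, Finset.mem_univ, true_and]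
      exact (Finset.mem_filter.1 hω).2
    · intro ω₁ h₁ ω₂ h₂ h
      exact Quotient.out_injective h
    · intro i hi
      have hifix : σ i = i := (Finset.mem_filter.1 hi).2
      refine ⟨Quotient.mk (orbitRel G (Fin n)) i, ?_, ?_⟩
      · have hout : (Quotient.mk (orbitRel G (Fin n)) i).out ∈ orbit G i := by
          have := Quotient.mk_out (s := orbitRel G (Fin n)) i
          exact (orbitRel_apply).1 this
        rw [orbit_eq_singleton σ hifix] at hout
        simp only [hA, Finset.mem_filter, Finset.mem_univ, true_and, hP]
        rw [Set.mem_singleton_iff.1 hout, hifix]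
      · have hout : (Quotient.mk (orbitRel G (Fin n)) i).out ∈ orbit G i := by
          have := Quotient.mk_out (s := orbitRel G (Fin n)) i
          exact (orbitRel_apply).1 this
        rw [orbit_eq_singleton σ hifix] at hout
        exact Set.mem_singleton_iff.1 hout
  have hBc : B.card = c := by
    have hp0 : 0 < p := hp.pos
    have : c * p + f = f + B.card * p := by rw [← hn, hsplit, hAf]
    have h2 : c * p = B.card * p := by omega
    exact (Nat.eq_of_mul_eq_mul_right hp0 h2).symm
  have : Fintype.card Ω = c + f := by
    have := Finset.card_filter_add_card_filter_not (s := Finset.univ) P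
    rw [← hA, ← hB] at this
    simp only [Finset.card_univ] at this
    omega
  rw [Nat.card_eq_fintype_card, this]
end Counting

section InvDim
open MulAction
variable {n : ℕ}

lemma inv_apply_smul (σ : Equiv.Perm (Fin n)) (v : Fin n → ZMod 2) (hv : v ∘ σ = v)
    (g : Subgroup.zpowers σ) (i : Fin n) : v (g • i) = v i := by
  obtain ⟨k, hk⟩ := coe_zpowers_eq_pow σ g
  show v ((g : Equiv.Perm (Fin n)) i) = v i
  rw [hk]
  exact inv_apply_pow σ v hv k i

lemma finrank_fixedTop (σ : Equiv.Perm (Fin n)) :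
    finrank (ZMod 2) (fixedCode σ (⊤ : Submodule (ZMod 2) (Fin n → ZMod 2)))
      = Nat.card (orbitRel.Quotient (Subgroup.zpowers σ) (Fin n)) := by
  classical
  set G := Subgroup.zpowers σ with hG
  set Ω := orbitRel.Quotient G (Fin n) with hΩ
  set Vinv := fixedCode σ (⊤ : Submodule (ZMod 2) (Fin n → ZMod 2)) with hVinv
  -- linear map Vinv → (Ω → ZMod 2)
  let φ : Vinv →ₗ[ZMod 2] (Ω → ZMod 2) :=
    { toFun := fun v => fun ω => (v : Fin n → ZMod 2) (Quotient.out ω)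
      map_add' := fun a b => rfl
      map_smul' := fun r a => rfl }
  have hbij : Function.Bijective φ := by
    constructor
    · intro a b hab
      ext i
      have h1 : (Quotient.mk (orbitRel G (Fin n)) i).out ∈ orbit G i :=
        (orbitRel_apply).1 (Quotient.mk_out (s := orbitRel G (Fin n)) i)
      obtain ⟨g, hg⟩ := h1
      simp only at hg
      have ha := inv_apply_smul σ (a : Fin n → ZMod 2) a.2.2 g i
      have hb := inv_apply_smul σ (b : Fin n → ZMod 2) b.2.2 g i
      rw [hg] at ha hb
      have := congrFun hab (Quotient.mk (orbitRel G (Fin n)) i)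
      simp only [φ] at this
      rw [← ha, ← hb]
      exact this
    · intro w
      refine ⟨⟨fun i => w (Quotient.mk (orbitRel G (Fin n)) i), ?_, ?_⟩, ?_⟩
      · trivial
      · funext i
        simp only [Function.comp_apply]
        congr 1
        apply Quotient.sound
        show (orbitRel (Subgroup.zpowers σ) (Fin n)) (σ i) i
        rw [orbitRel_apply]
        exact ⟨⟨σ, Subgroup.mem_zpowers σ⟩, rfl⟩
      · funext ω
        show w (Quotient.mk (orbitRel G (Fin n)) (Quotient.out ω)) = w ω
        rw [Quotient.out_eq]
  have := (LinearEquiv.ofBijective φ hbij).finrank_eq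
  rw [this]
  rw [Module.finrank_pi (ZMod 2)]
  rw [Nat.card_eq_fintype_card]
end InvDim

section FixedSelfDual
open MulAction
variable {n p c f : ℕ}

lemma normMap_mem_fixed (σ : Equiv.Perm (Fin n)) (C : Submodule (ZMod 2) (Fin n → ZMod 2))
    (haut : ∀ v, v ∈ C ↔ v ∘ σ ∈ C) (hord : orderOf σ = p)
    (v : Fin n → ZMod 2) (hv : v ∈ C) : normMap σ p v ∈ fixedCode σ C := by
  have hσp : σ ^ p = 1 := by rw [← hord]; exact pow_orderOf_eq_one σ
  constructor
  · have h := Submodule.sum_mem C (t := Finset.range p)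
      (f := fun k => (fun i => v ((σ ^ k) i)))
      (fun k _ => comp_pow_mem σ C haut v hv k)
    have he : normMap σ p v = ∑ k ∈ Finset.range p, (fun i => v ((σ ^ k) i)) := by
      funext i; simp [normMap]
    rw [he]; exact h
  · funext i
    show normMap σ p v (σ i) = normMap σ p v i
    simp only [normMap, LinearMap.coe_mk, AddHom.coe_mk]
    have key : ∀ k, v ((σ ^ k) (σ i)) = v ((σ ^ (k+1)) i) := by
      intro k
      have h : (σ ^ (k+1)) i = (σ ^ k) (σ i) := by
        simp [pow_succ, Equiv.Perm.mul_apply]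
      rw [h]
    simp only [key]
    have h1 : ∑ k ∈ Finset.range p, v ((σ ^ (k+1)) i) + v ((σ ^ 0) i)
        = ∑ k ∈ Finset.range p, v ((σ ^ k) i) + v ((σ ^ p) i) := by
      rw [← Finset.sum_range_succ' (fun k => v ((σ ^ k) i)) p,
          ← Finset.sum_range_succ (fun k => v ((σ ^ k) i)) p]
    have h2 : v ((σ ^ p) i) = v ((σ ^ 0) i) := by rw [hσp]; simp
    rw [h2] at h1
    exact add_right_cancel h1

lemma orbit_mem_smul_iff (σ : Equiv.Perm (Fin n)) (i j : Fin n) :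
    σ i ∈ orbit (Subgroup.zpowers σ) j ↔ i ∈ orbit (Subgroup.zpowers σ) j := by
  set g₀ : Subgroup.zpowers σ := ⟨σ, Subgroup.mem_zpowers σ⟩ with hg₀
  constructor
  · rintro ⟨g, hg⟩
    refine ⟨g₀⁻¹ * g, ?_⟩
    simp only at hg ⊢
    have : (g₀⁻¹ * g) • j = g₀⁻¹ • (g • j) := (mul_smul _ _ _)
    rw [this, hg]
    show (σ⁻¹ : Equiv.Perm (Fin n)) (σ i) = i
    simp
  · rintro ⟨g, hg⟩
    refine ⟨g₀ * g, ?_⟩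
    simp only at hg ⊢
    have : (g₀ * g) • j = g₀ • (g • j) := (mul_smul _ _ _)
    rw [this, hg]
    rfl

lemma two_mul_finrank_fixed (hp : p.Prime) (hodd : Odd p) (σ : Equiv.Perm (Fin n))
    (C : Submodule (ZMod 2) (Fin n → ZMod 2)) (hself : C = dualCode C)
    (haut : ∀ v, v ∈ C ↔ v ∘ σ ∈ C) (hord : orderOf σ = p)
    (hfix : (Finset.univ.filter fun i => σ i = i).card = f)
    (hn : n = c * p + f) :
    2 * finrank (ZMod 2) (fixedCode σ C) = c + f := by
  classical
  set G := Subgroup.zpowers σ with hG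
  set Vinv := fixedCode σ (⊤ : Submodule (ZMod 2) (Fin n → ZMod 2)) with hVinv
  have hFle : fixedCode σ C ≤ Vinv := fun v hv => ⟨trivial, hv.2⟩
  set F' := (fixedCode σ C).comap Vinv.subtype with hF'
  set B' := (dotForm (Fin n)).restrict Vinv with hB'
  have hB'apply : ∀ x y : Vinv, B' x y = ∑ i, (x : Fin n → ZMod 2) i * (y : Fin n → ZMod 2) i :=
    fun x y => rfl
  have hsymm : ∀ x y : Vinv, B' x y = B' y x := by
    intro x y
    rw [hB'apply, hB'apply]
    exact dotForm_symm (x : Fin n → ZMod 2) (y : Fin n → ZMod 2)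
  have hnd : ∀ x : Vinv, (∀ y, B' x y = 0) → x = 0 := by
    intro x hx
    ext j
    -- use the orbit indicator of j
    set w : Fin n → ZMod 2 := fun i => if i ∈ orbit G j then 1 else 0 with hw
    have hwinv : w ∘ σ = w := by
      funext i
      simp only [Function.comp_apply, hw]
      by_cases h : i ∈ orbit G j
      · rw [if_pos h, if_pos ((orbit_mem_smul_iff σ i j).2 h)]
      · rw [if_neg h, if_neg (fun hc => h ((orbit_mem_smul_iff σ i j).1 hc))]
    have hwmem : w ∈ Vinv := ⟨trivial, hwinv⟩
    have h0 := hx ⟨w, hwmem⟩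
    rw [hB'apply] at h0
    simp only at h0
    -- compute the sum
    have hsum : ∑ i, (x : Fin n → ZMod 2) i * w i
        = ∑ i ∈ Finset.univ.filter (· ∈ orbit G j), (x : Fin n → ZMod 2) i := by
      rw [Finset.sum_filter]
      apply Finset.sum_congr rfl
      intro i _
      by_cases h : i ∈ orbit G j
      · rw [if_pos h, hw]; simp [h]
      · rw [if_neg h, hw]; simp [h]
    have hconst : ∀ i ∈ Finset.univ.filter (· ∈ orbit G j),
        (x : Fin n → ZMod 2) i = (x : Fin n → ZMod 2) j := by
      intro i hi
      obtain ⟨g, hg⟩ := (Finset.mem_filter.1 hi).2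
      simp only at hg
      rw [← hg]
      exact inv_apply_smul σ (x : Fin n → ZMod 2) x.2.2 g j
    rw [hsum, Finset.sum_congr rfl hconst, Finset.sum_const] at h0
    have hfiltercard : (Finset.univ.filter (· ∈ orbit G j)).card
        = Fintype.card (orbit G j) := by
      rw [← Set.toFinset_card]
      congr 1
      ext i
      simp [Set.mem_toFinset]
    rw [hfiltercard] at h0
    have hodd' : Odd (Fintype.card (orbit G j)) := by
      by_cases hj : σ j = j
      · rw [card_orbit_fix σ hj]; exact odd_one
      · rw [card_orbit_not_fix σ hp hord hj]; exact hodd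
    have : (Fintype.card (orbit G j) : ZMod 2) = 1 := natCast_odd_zmod2 hodd'
    rw [nsmul_eq_mul, this, one_mul] at h0
    simpa using h0
  have hW : B'.orthogonal F' = F' := by
    apply le_antisymm
    · -- orthogonal ⊆ F'
      intro w hw
      have hwC : (w : Fin n → ZMod 2) ∈ C := by
        rw [hself]
        intro v hv
        -- use u = normMap σ p v ∈ fixedCode σ C
        have huF : normMap σ p v ∈ fixedCode σ C := normMap_mem_fixed σ C haut hord v hv
        have huF' : (⟨normMap σ p v, hFle huF⟩ : Vinv) ∈ F' := huF
        have h0 : B' ⟨normMap σ p v, hFle huF⟩ w = 0 := hw _ huF'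
        rw [hB'apply] at h0
        simp only [normMap, LinearMap.coe_mk, AddHom.coe_mk] at h0
        -- ∑ i (∑ k v (σ^k i)) * w i = p * ∑ i v i * w i = ∑ i v i * w i
        have hstep : ∀ k ∈ Finset.range p,
            ∑ i, v ((σ ^ k) i) * (w : Fin n → ZMod 2) i
              = ∑ i, v i * (w : Fin n → ZMod 2) i := by
          intro k _
          have h1 : ∀ i, v ((σ ^ k) i) * (w : Fin n → ZMod 2) i
              = v ((σ ^ k) i) * (w : Fin n → ZMod 2) ((σ ^ k) i) := by
            intro i
            rw [inv_apply_pow σ (w : Fin n → ZMod 2) w.2.2 k i]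
          simp only [h1]
          exact Equiv.sum_comp (σ ^ k) (fun i => v i * (w : Fin n → ZMod 2) i)
        have h2 : ∑ i, (∑ k ∈ Finset.range p, v ((σ ^ k) i)) * (w : Fin n → ZMod 2) i
            = ∑ k ∈ Finset.range p, ∑ i, v ((σ ^ k) i) * (w : Fin n → ZMod 2) i := by
          rw [Finset.sum_comm]
          apply Finset.sum_congr rfl
          intro i _
          rw [Finset.sum_mul]
        rw [h2, Finset.sum_congr rfl hstep, Finset.sum_const, Finset.card_range,
          nsmul_eq_mul, natCast_odd_zmod2 hodd, one_mul] at h0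
        rw [← h0]
        apply Finset.sum_congr rfl
        intro i _
        rw [mul_comm]
      exact ⟨hwC, w.2.2⟩
    · -- F' ⊆ orthogonal
      intro u hu
      rw [LinearMap.BilinForm.mem_orthogonal_iff]
      intro y hy
      show B' y u = 0
      rw [hB'apply]
      have huC : (u : Fin n → ZMod 2) ∈ C := hu.1
      have hyD : (y : Fin n → ZMod 2) ∈ dualCode C := by rw [← hself]; exact hy.1
      exact hyD _ huC
  have hmain := two_mul_finrank_of_selfdual B' hsymm hnd F' hW
  have h1 : finrank (ZMod 2) F' = finrank (ZMod 2) (fixedCode σ C) :=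
    (Submodule.comapSubtypeEquivOfLe hFle).finrank_eq
  have h2 : finrank (ZMod 2) Vinv = c + f := by
    rw [hVinv, finrank_fixedTop σ, card_orbits_eq σ hp hord hfix hn]
  rw [h1, h2] at hmain
  exact hmain
end FixedSelfDual

section Irred
open Polynomial

lemma cyclotomic_irreducible_zmod2 {p : ℕ} (hp : p.Prime) (hodd : Odd p)
    (hprim : orderOf (2 : ZMod p) = p - 1) :
    Irreducible (cyclotomic p (ZMod 2)) := by
  classical
  haveI : Fact p.Prime := ⟨hp⟩
  set q : Polynomial (ZMod 2) := cyclotomic p (ZMod 2) with hq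
  have hqmonic : q.Monic := cyclotomic.monic p (ZMod 2)
  have hqne : q ≠ 0 := hqmonic.ne_zero
  have hqdeg : q.natDegree = p - 1 := by
    rw [hq, natDegree_cyclotomic, Nat.totient_prime hp]
  have hqnotunit : ¬ IsUnit q := by
    intro h
    have := natDegree_eq_zero_of_isUnit h
    rw [hqdeg] at this
    have := hp.two_le
    omega
  obtain ⟨a, ha, hadvd⟩ := WfDvdMonoid.exists_irreducible_factor hqnotunit hqne
  obtain ⟨b, hb⟩ := hadvd
  haveI : Fact (Irreducible a) := ⟨ha⟩
  set K := AdjoinRoot a with hK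
  have hane : a ≠ 0 := ha.ne_zero
  haveI : FiniteDimensional (ZMod 2) K := PowerBasis.finite (AdjoinRoot.powerBasis hane)
  haveI : Finite K := Module.finite_of_finite (ZMod 2)
  haveI : Fintype K := Fintype.ofFinite K
  set r : K := AdjoinRoot.root a with hr
  have haq : (aeval r) q = 0 := by
    rw [hb, map_mul]
    have : (aeval r) a = 0 := AdjoinRoot.eval₂_root a
    rw [this, zero_mul]
  have hsum : ∑ k ∈ Finset.range p, r ^ k = 0 := by
    have := haq
    rw [hq, cyclotomic_prime (ZMod 2) p] at this
    simpa using this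
  have hrp : r ^ p = 1 := by
    have := geom_sum_mul r p
    rw [hsum, zero_mul] at this
    have h1 : r ^ p - 1 = 0 := this.symm
    linear_combination h1
  have hrne1 : r ≠ 1 := by
    intro h
    rw [h] at hsum
    have hps : ((p : ℕ) : K) = 0 := by simpa using hsum
    rw [← map_natCast (algebraMap (ZMod 2) K) p] at hps
    have h3 : ((p : ℕ) : ZMod 2) = 0 :=
      (algebraMap (ZMod 2) K).injective (by rw [hps, map_zero])
    rw [natCast_odd_zmod2 hodd] at h3
    exact one_ne_zero h3
  have hordr : orderOf r = p := orderOf_eq_prime hrp hrne1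
  -- lift to units
  have hrunit : IsUnit r := IsUnit.of_mul_eq_one (a := r) (r ^ (p - 1)) (by
    rw [← pow_succ']
    have : p - 1 + 1 = p := Nat.succ_pred_eq_of_pos hp.pos
    rw [this, hrp])
  obtain ⟨u, hu⟩ := hrunit
  have hordu : orderOf u = p := by
    rw [← hordr, ← hu, orderOf_units]
  have hdvd : p ∣ Fintype.card Kˣ := by
    rw [← hordu]; exact orderOf_dvd_card
  have hcardK : Fintype.card K = 2 ^ a.natDegree := by
    have hz : Fintype.card (ZMod 2) = 2 := ZMod.card 2
    rw [Module.card_eq_pow_finrank (K := ZMod 2) (V := K), hz, (AdjoinRoot.powerBasis hane).finrank, AdjoinRoot.powerBasis_dim]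
  have hcardU : Fintype.card Kˣ = 2 ^ a.natDegree - 1 := by
    rw [Fintype.card_units, hcardK]
  -- so 2^natDegree a ≡ 1 mod p
  have h2pow : (2 : ZMod p) ^ a.natDegree = 1 := by
    have h1le : 1 ≤ 2 ^ a.natDegree := Nat.one_le_two_pow
    have : ((2 ^ a.natDegree - 1 : ℕ) : ZMod p) = 0 := by
      rw [hcardU] at hdvd
      exact (ZMod.natCast_eq_zero_iff _ _).2 hdvd
    rw [Nat.cast_sub h1le] at this
    push_cast at this
    linear_combination this
  have hdvddeg : p - 1 ∣ a.natDegree := by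
    rw [← hprim]
    exact orderOf_dvd_of_pow_eq_one h2pow
  have hdegle : a.natDegree ≤ p - 1 := by
    rw [← hqdeg]
    exact natDegree_le_of_dvd ⟨b, hb⟩ hqne
  have hdegpos : 0 < a.natDegree := ha.natDegree_pos
  have hdeg : a.natDegree = p - 1 := by
    rcases hdvddeg with ⟨m, hm⟩
    have hp1 : 0 < p - 1 := by have := hp.two_le; omega
    have hm1 : m = 1 := by
      rcases Nat.eq_zero_or_pos m with h0 | h1
      · subst h0; rw [mul_zero] at hm; omega
      · by_contra hne
        have h2m : 2 ≤ m := by omega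
        have : (p - 1) * 2 ≤ (p - 1) * m := Nat.mul_le_mul_left _ h2m
        omega
    rw [hm1, mul_one] at hm
    exact hm
  -- b is a unit
  have hbne : b ≠ 0 := by rintro rfl; rw [mul_zero] at hb; exact hqne hb
  have hbdeg : b.natDegree = 0 := by
    have := natDegree_mul (p := a) (q := b) ha.ne_zero hbne
    rw [← hb, hqdeg, hdeg] at this
    omega
  have hbunit : IsUnit b := by
    rw [Polynomial.eq_C_of_natDegree_eq_zero hbdeg]
    apply Polynomial.isUnit_C.2
    have : b.coeff 0 ≠ 0 := by
      intro h
      apply hbne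
      rw [Polynomial.eq_C_of_natDegree_eq_zero hbdeg, h, map_zero]
    exact isUnit_iff_ne_zero.2 this
  have : Associated a q := ⟨hbunit.unit, by rw [IsUnit.unit_spec]; exact hb.symm⟩
  exact this.irreducible ha
end Irred

section EvenModule
open Polynomial
variable {n p : ℕ}

lemma cyclic_shift (σ : Equiv.Perm (Fin n)) (hσp : σ ^ p = 1) (v : Fin n → ZMod 2) (i : Fin n) :
    ∑ k ∈ Finset.range p, v ((σ ^ (k+1)) i) = ∑ k ∈ Finset.range p, v ((σ ^ k) i) := by
  have h1 : ∑ k ∈ Finset.range p, v ((σ ^ (k+1)) i) + v ((σ ^ 0) i)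
      = ∑ k ∈ Finset.range p, v ((σ ^ k) i) + v ((σ ^ p) i) := by
    rw [← Finset.sum_range_succ' (fun k => v ((σ ^ k) i)) p,
        ← Finset.sum_range_succ (fun k => v ((σ ^ k) i)) p]
  have h2 : v ((σ ^ p) i) = v ((σ ^ 0) i) := by rw [hσp]; simp
  rw [h2] at h1
  exact add_right_cancel h1

lemma comp_mem_evenCode (σ : Equiv.Perm (Fin n)) (C : Submodule (ZMod 2) (Fin n → ZMod 2))
    (haut : ∀ v, v ∈ C ↔ v ∘ σ ∈ C) (hord : orderOf σ = p)
    (v : Fin n → ZMod 2) (hv : v ∈ evenCode p σ C) : v ∘ σ ∈ evenCode p σ C := by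
  have hσp : σ ^ p = 1 := by rw [← hord]; exact pow_orderOf_eq_one σ
  refine ⟨(haut v).1 hv.1, fun i => ?_⟩
  have : ∀ k, (v ∘ σ) ((σ ^ k) i) = v ((σ ^ (k+1)) i) := by
    intro k
    simp only [Function.comp_apply]
    congr 1
    rw [pow_succ']
    rfl
  simp only [this]
  rw [cyclic_shift σ hσp v i]
  exact hv.2 i

lemma dvd_finrank_evenCode (hp : p.Prime) (hodd : Odd p)
    (hprim : orderOf (2 : ZMod p) = p - 1)
    (σ : Equiv.Perm (Fin n)) (C : Submodule (ZMod 2) (Fin n → ZMod 2))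
    (haut : ∀ v, v ∈ C ↔ v ∘ σ ∈ C) (hord : orderOf σ = p) :
    (p - 1) ∣ finrank (ZMod 2) (evenCode p σ C) := by
  classical
  haveI : Fact p.Prime := ⟨hp⟩
  set q : Polynomial (ZMod 2) := cyclotomic p (ZMod 2) with hq
  have hirr : Irreducible q := cyclotomic_irreducible_zmod2 hp hodd hprim
  haveI : Fact (Irreducible q) := ⟨hirr⟩
  set E := evenCode p σ C with hE
  -- the shift endomorphism
  set T : E →ₗ[ZMod 2] E :=
    { toFun := fun v => ⟨(v : Fin n → ZMod 2) ∘ σ, comp_mem_evenCode σ C haut hord _ v.2⟩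
      map_add' := fun a b => rfl
      map_smul' := fun r a => rfl } with hT
  have hTpow : ∀ (k : ℕ) (v : E) (i : Fin n),
      ((T ^ k) v : Fin n → ZMod 2) i = (v : Fin n → ZMod 2) ((σ ^ k) i) := by
    intro k
    induction k with
    | zero => intro v i; simp
    | succ k ih =>
        intro v i
        have : T ^ (k+1) = T ^ k * T := by rw [pow_succ]
        rw [this]
        have h2 : ((T ^ k * T) v : Fin n → ZMod 2) i = ((T ^ k) (T v) : Fin n → ZMod 2) i := rfl
        rw [h2, ih (T v) i]
        show ((v : Fin n → ZMod 2) ∘ σ) ((σ ^ k) i) = (v : Fin n → ZMod 2) ((σ ^ (k+1)) i)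
        simp only [Function.comp_apply]
        congr 1
        rw [pow_succ']
        rfl
  -- q(T) = 0
  have hqT : (aeval T) q = 0 := by
    rw [hq, cyclotomic_prime (ZMod 2) p, map_sum]
    ext v i
    simp only [map_pow, aeval_X, LinearMap.zero_apply, ZeroMemClass.coe_zero, Pi.zero_apply]
    rw [LinearMap.sum_apply]
    have hcoe : ((∑ k ∈ Finset.range p, (T ^ k) v : E) : Fin n → ZMod 2) i
        = ∑ k ∈ Finset.range p, ((T ^ k) v : Fin n → ZMod 2) i := by
      rw [Submodule.coe_sum, Finset.sum_apply]
    rw [hcoe]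
    simp only [hTpow]
    exact v.2.2 i
  -- the ring hom from AdjoinRoot q
  have h0 : ∀ g ∈ Ideal.span {q}, (aeval T).toRingHom g = 0 := by
    intro g hg
    obtain ⟨d, rfl⟩ := Ideal.mem_span_singleton.1 hg
    simp only [AlgHom.toRingHom_eq_coe, RingHom.coe_coe, map_mul]
    rw [hqT, zero_mul]
  letI ψ : AdjoinRoot q →+* Module.End (ZMod 2) E :=
    Ideal.Quotient.lift (Ideal.span {q}) (aeval T).toRingHom h0
  have hψmk : ∀ g : Polynomial (ZMod 2), ψ (AdjoinRoot.mk q g) = aeval T g := by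
    intro g
    exact Ideal.Quotient.lift_mk _ _ _
  letI : Module (AdjoinRoot q) E := Module.compHom _ ψ
  have hsmul : ∀ (k : AdjoinRoot q) (v : E), k • v = ψ k v := fun k v => rfl
  letI : IsScalarTower (ZMod 2) (AdjoinRoot q) E := by
    constructor
    intro z k v
    rw [hsmul, hsmul, Algebra.smul_def, map_mul]
    have halg : ψ (algebraMap (ZMod 2) (AdjoinRoot q) z)
        = algebraMap (ZMod 2) (Module.End (ZMod 2) E) z := by
      rw [AdjoinRoot.algebraMap_eq]
      show ψ (AdjoinRoot.mk q (Polynomial.C z)) = _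
      rw [hψmk, aeval_C]
    rw [halg]
    show (algebraMap (ZMod 2) (Module.End (ZMod 2) E) z) ((ψ k) v) = z • (ψ k) v
    rw [Module.algebraMap_end_apply]
  have hqne : q ≠ 0 := (cyclotomic.monic p (ZMod 2)).ne_zero
  have hrankK : finrank (ZMod 2) (AdjoinRoot q) = p - 1 := by
    rw [(AdjoinRoot.powerBasis hqne).finrank, AdjoinRoot.powerBasis_dim, hq,
      natDegree_cyclotomic, Nat.totient_prime hp]
  have htower := Module.finrank_mul_finrank (ZMod 2) (AdjoinRoot q) E
  rw [hrankK] at htower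
  exact ⟨_, htower.symm⟩
end EvenModule

/-- If a binary self-dual [n, n/2, d] code has an automorphism of type p-(c,f) where
`p` is an odd prime and 2 is a primitive root modulo `p`, then `c` is even. -/
theorem statement17 {n p c f d : ℕ} (hp : p.Prime) (hodd : Odd p)
    (hprim : orderOf (2 : ZMod p) = p - 1)
    (C : Submodule (ZMod 2) (Fin n → ZMod 2))
    (hself : C = dualCode C)
    (hdim : Module.finrank (ZMod 2) C = n / 2)
    (hmin : ∀ v ∈ C, v ≠ 0 → d ≤ wt v) (hex : ∃ v ∈ C, wt v = d)
    (σ : Equiv.Perm (Fin n))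
    (haut : ∀ v, v ∈ C ↔ v ∘ σ ∈ C)
    (hord : orderOf σ = p)
    (hfix : (Finset.univ.filter fun i => σ i = i).card = f)
    (hn : n = c * p + f) :
    Even c := by
  classical
  have h1 : 2 * finrank (ZMod 2) C = n := two_mul_finrank_selfdual_code C hself
  have h2 : finrank (ZMod 2) C
      = finrank (ZMod 2) (fixedCode σ C) + finrank (ZMod 2) (evenCode p σ C) :=
    finrank_decomp hp hodd σ C haut hord
  have h3 : 2 * finrank (ZMod 2) (fixedCode σ C) = c + f :=
    two_mul_finrank_fixed hp hodd σ C hself haut hord hfix hn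
  obtain ⟨m, hm⟩ := dvd_finrank_evenCode hp hodd hprim σ C haut hord
  have hp1 : 1 ≤ p - 1 := by have := hp.two_le; omega
  have hcp : c * p = c * (p - 1) + c := by
    have hpe : p - 1 + 1 = p := by omega
    calc c * p = c * (p - 1 + 1) := by rw [hpe]
    _ = c * (p - 1) + c := by ring
  rw [h2] at h1
  have h1' : 2 * (finrank (ZMod 2) (fixedCode σ C) + (p-1) * m) = c * (p - 1) + c + f := by
    rw [← hm, ← hcp, ← hn]
    exact h1
  have h4 : c * (p - 1) = 2 * ((p - 1) * m) := by linarith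
  have h5 : c * (p - 1) = (2 * m) * (p - 1) := by rw [h4]; ring
  have h6 : c = 2 * m := Nat.eq_of_mul_eq_mul_right (by omega) h5
  exact ⟨m, by omega⟩
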